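/- Let q be an odd prime and d a nonzero integer with q ∤ d, and suppose there exist w, z ∈ ℚ_q with d w² = 4p − ((M/d) z² − 2u)², where M is an integer with q ∥ M (q divides M exactly once), p, u integers with q ∤ p, 4p = (2u)² + 256. If (w, z) has non-integral coordinates in ℚ_q, writing w = q^{−m}w₁, z = q^{−n}z₁ with w₁, z₁ ∈ ℤ_q^×, m, n > 0, then necessarily m = 2n − 1, and reducing modulo q yields that d·(−1) is a quadratic residue modulo q, i.e. (d/q) = (−1/q). -/

import Mathlib

/-- let `q` be an odd prime, `d` a nonzero integer with `q ∤ d`, `M` an integer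
exactly divisible by `q` with `d ∣ M`, and `p = u² + 64` with `q ∤ p` (so `4p = (2u)² + 256`).
If `w, z ∈ ℚ_q` satisfy `d w² = 4p - ((M/d) z² - 2u)²` and have non-integral coordinates,
say of valuations `-m` and `-n` with `m, n > 0`, then necessarily `m = 2n - 1`, and reduction
modulo `q` shows `(d/q) = (-1/q)`, i.e. `d` is a square mod `q` iff `-1` is. -/
theorem stmt_19 (q : ℕ) [Fact q.Prime] (hqodd : Odd q)
    (d M u : ℤ) (hd0 : d ≠ 0) (hqd : ¬ ((q : ℤ) ∣ d)) (hdM : d ∣ M)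
    (hqM : (q : ℤ) ∣ M) (hq2M : ¬ ((q : ℤ) ^ 2 ∣ M)) (hqp : ¬ ((q : ℤ) ∣ (u ^ 2 + 64)))
    (w z : ℚ_[q]) (m n : ℕ) (hm : 0 < m) (hn : 0 < n)
    (hw : w.valuation = -(m : ℤ)) (hz : z.valuation = -(n : ℤ))
    (heq : (d : ℚ_[q]) * w ^ 2 =
      4 * ((u : ℚ_[q]) ^ 2 + 64) - (((M / d : ℤ) : ℚ_[q]) * z ^ 2 - 2 * (u : ℚ_[q])) ^ 2) :
    m = 2 * n - 1 ∧ (IsSquare ((d : ZMod q)) ↔ IsSquare ((-1 : ZMod q))) := by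
  have hq : q.Prime := Fact.out
  have hqZ : Prime (q : ℤ) := Nat.prime_iff_prime_int.mp hq
  have hq2 : q ≠ 2 := by rintro rfl; exact (Nat.not_odd_iff_even.mpr (by decide)) hqodd
  have hq1 : (1 : ℝ) < q := by exact_mod_cast hq.one_lt
  have hq0 : (0 : ℝ) < q := lt_trans one_pos hq1
  have hqne1 : (q : ℝ) ≠ 1 := ne_of_gt hq1
  -- w, z are nonzero
  have hw0 : w ≠ 0 := by
    intro h; rw [h, Padic.valuation_zero] at hw; omega
  have hz0 : z ≠ 0 := by
    intro h; rw [h, Padic.valuation_zero] at hz; omega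
  have hnw : ‖w‖ = (q : ℝ) ^ (m : ℤ) := by
    rw [Padic.norm_eq_zpow_neg_valuation hw0, hw, neg_neg]
  have hnz : ‖z‖ = (q : ℝ) ^ (n : ℤ) := by
    rw [Padic.norm_eq_zpow_neg_valuation hz0, hz, neg_neg]
  -- M/d = q * k with q ∤ k
  obtain ⟨k, hk⟩ : (q : ℤ) ∣ M / d := by
    have h1 : (q : ℤ) ∣ d * (M / d) := by rwa [Int.mul_ediv_cancel' hdM]
    exact (hqZ.dvd_mul.mp h1).resolve_left hqd
  have hqk : ¬ (q : ℤ) ∣ k := by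
    intro h
    apply hq2M
    have h1 : (q : ℤ) ^ 2 ∣ M / d := by
      obtain ⟨t, ht⟩ := h
      exact ⟨t, by rw [hk, ht]; ring⟩
    exact h1.trans (Int.ediv_dvd_of_dvd hdM)
  -- norm computations for integer casts
  have norm_int_one : ∀ a : ℤ, ¬ (q : ℤ) ∣ a → ‖(a : ℚ_[q])‖ = 1 := by
    intro a ha
    refine le_antisymm (Padic.norm_int_le_one a) ?_
    by_contra h
    exact ha ((Padic.norm_intCast_lt_one_iff (k := a)).mp (lt_of_not_ge h))
  have hnMd : ‖((M / d : ℤ) : ℚ_[q])‖ = (q : ℝ)⁻¹ := by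
    rw [hk]
    push_cast
    rw [norm_mul, Padic.norm_p, norm_int_one k hqk, mul_one]
  -- the norm of a := (M/d) z² - 2u
  set a : ℚ_[q] := ((M / d : ℤ) : ℚ_[q]) * z ^ 2 - 2 * (u : ℚ_[q]) with ha
  have hna : ‖a‖ = (q : ℝ) ^ (2 * (n : ℤ) - 1) := by
    have h1 : ‖((M / d : ℤ) : ℚ_[q]) * z ^ 2‖ = (q : ℝ) ^ (2 * (n : ℤ) - 1) := by
      rw [norm_mul, norm_pow, hnz, hnMd, ← zpow_natCast _ 2, ← zpow_mul, ← zpow_neg_one,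
        ← zpow_add₀ (ne_of_gt hq0)]
      ring_nf
    have h2 : ‖2 * (u : ℚ_[q])‖ ≤ 1 := by
      have : (2 : ℚ_[q]) * (u : ℚ_[q]) = ((2 * u : ℤ) : ℚ_[q]) := by push_cast; ring
      rw [this]; exact Padic.norm_int_le_one _
    have hlt : ‖2 * (u : ℚ_[q])‖ < ‖((M / d : ℤ) : ℚ_[q]) * z ^ 2‖ := by
      rw [h1]
      refine lt_of_le_of_lt h2 ?_
      have : (0 : ℤ) < 2 * (n : ℤ) - 1 := by omega
      calc (1 : ℝ) = (q : ℝ) ^ (0 : ℤ) := by rw [zpow_zero]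
        _ < (q : ℝ) ^ (2 * (n : ℤ) - 1) := by
            exact zpow_lt_zpow_right₀ hq1 this
    have hne : ‖((M / d : ℤ) : ℚ_[q]) * z ^ 2‖ ≠ ‖-(2 * (u : ℚ_[q]))‖ := by
      rw [norm_neg]; exact ne_of_gt hlt
    rw [ha, sub_eq_add_neg, Padic.add_eq_max_of_ne hne, norm_neg,
      max_eq_left hlt.le, h1]
  -- norm of P := 4(u² + 64)
  have hqP : ¬ (q : ℤ) ∣ 4 * (u ^ 2 + 64) := by
    intro h
    rcases hqZ.dvd_mul.mp h with h4 | hp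
    · have : (q : ℤ) ∣ 2 := by
        rcases hqZ.dvd_mul.mp (show (q:ℤ) ∣ 2 * 2 by simpa using h4) with h | h <;> exact h
      have h2 : q ∣ 2 := by exact_mod_cast this
      exact hq2 ((Nat.prime_dvd_prime_iff_eq hq Nat.prime_two).mp h2)
    · exact hqp hp
  have hP : (4 : ℚ_[q]) * ((u : ℚ_[q]) ^ 2 + 64) = ((4 * (u ^ 2 + 64) : ℤ) : ℚ_[q]) := by
    push_cast; ring
  have hnP : ‖(4 : ℚ_[q]) * ((u : ℚ_[q]) ^ 2 + 64)‖ = 1 := by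
    rw [hP]; exact norm_int_one _ hqP
  -- compare norms of both sides
  have hnd : ‖(d : ℚ_[q])‖ = 1 := norm_int_one d hqd
  have hlhs : ‖(d : ℚ_[q]) * w ^ 2‖ = (q : ℝ) ^ (2 * (m : ℤ)) := by
    rw [norm_mul, norm_pow, hnd, hnw, one_mul, ← zpow_natCast _ 2, ← zpow_mul]
    ring_nf
  have hrhs : ‖(4 : ℚ_[q]) * ((u : ℚ_[q]) ^ 2 + 64) - a ^ 2‖ = (q : ℝ) ^ (4 * (n : ℤ) - 2) := by
    have hna2 : ‖a ^ 2‖ = (q : ℝ) ^ (4 * (n : ℤ) - 2) := by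
      rw [norm_pow, hna, ← zpow_natCast _ 2, ← zpow_mul]
      ring_nf
    have hlt : ‖(4 : ℚ_[q]) * ((u : ℚ_[q]) ^ 2 + 64)‖ < ‖a ^ 2‖ := by
      rw [hnP, hna2]
      have : (0 : ℤ) < 4 * (n : ℤ) - 2 := by omega
      calc (1 : ℝ) = (q : ℝ) ^ (0 : ℤ) := by rw [zpow_zero]
        _ < _ := zpow_lt_zpow_right₀ hq1 this
    have hne : ‖(4 : ℚ_[q]) * ((u : ℚ_[q]) ^ 2 + 64)‖ ≠ ‖-(a ^ 2)‖ := by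
      rw [norm_neg]; exact ne_of_lt hlt
    rw [sub_eq_add_neg, Padic.add_eq_max_of_ne hne, norm_neg,
      max_eq_right hlt.le, hna2]
  have hmn : 2 * (m : ℤ) = 4 * (n : ℤ) - 2 := by
    have := heq
    have h := congrArg (‖·‖) heq
    rw [hlhs, hrhs] at h
    exact (zpow_right_inj₀ hq0 hqne1).mp h
  have hmn' : m = 2 * n - 1 := by omega
  refine ⟨hmn', ?_⟩
  -- now the mod-q part
  set W : ℚ_[q] := (q : ℚ_[q]) ^ m * w with hW
  set A : ℚ_[q] := (q : ℚ_[q]) ^ m * a with hA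
  have hnqm : ‖(q : ℚ_[q]) ^ m‖ = (q : ℝ) ^ (-(m : ℤ)) := Padic.norm_p_pow m
  have hnW : ‖W‖ = 1 := by
    rw [hW, norm_mul, hnqm, hnw, ← zpow_add₀ (ne_of_gt hq0), neg_add_cancel, zpow_zero]
  have hnA : ‖A‖ = 1 := by
    rw [hA, norm_mul, hnqm, hna, ← zpow_add₀ (ne_of_gt hq0)]
    have : -(m : ℤ) + (2 * (n : ℤ) - 1) = 0 := by omega
    rw [this, zpow_zero]
  have heq2 : (d : ℚ_[q]) * W ^ 2 =
      ((4 * (u ^ 2 + 64) : ℤ) : ℚ_[q]) * ((q : ℚ_[q]) ^ m) ^ 2 - A ^ 2 := by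
    rw [hW, hA, ha]
    push_cast
    linear_combination ((q : ℚ_[q]) ^ m) ^ 2 * heq
  -- lift to ℤ_[q]
  set W' : ℤ_[q] := ⟨W, hnW.le⟩ with hW'
  set A' : ℤ_[q] := ⟨A, hnA.le⟩ with hA'
  have heq3 : (d : ℤ_[q]) * W' ^ 2 =
      ((4 * (u ^ 2 + 64) : ℤ) : ℤ_[q]) * ((q : ℤ_[q]) ^ m) ^ 2 - A' ^ 2 := by
    apply Subtype.coe_injective
    push_cast [PadicInt.coe_mul, PadicInt.coe_sub, PadicInt.coe_pow, PadicInt.coe_intCast,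
      PadicInt.coe_natCast]
    change (d : ℚ_[q]) * W ^ 2 = _ - A ^ 2
    have h4 : ((4 : ℤ_[q]) : ℚ_[q]) = 4 := by simpa using PadicInt.coe_natCast (p := q) 4
    have h64 : ((64 : ℤ_[q]) : ℚ_[q]) = 64 := by simpa using PadicInt.coe_natCast (p := q) 64
    rw [heq2]; push_cast; rw [h4, h64]
  -- reduce mod q
  have heq4 : (d : ZMod q) * (PadicInt.toZMod W') ^ 2 = - (PadicInt.toZMod A') ^ 2 := by
    have := congrArg PadicInt.toZMod heq3
    simp only [map_mul, map_sub, map_pow, map_intCast, map_natCast] at this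
    rw [ZMod.natCast_self] at this
    rw [this]
    have hm0 : m ≠ 0 := by omega
    rw [zero_pow hm0]
    ring
  have hunit : ∀ x : ℤ_[q], ‖x‖ = 1 → PadicInt.toZMod x ≠ 0 := by
    intro x hx h0
    have : x ∈ RingHom.ker (PadicInt.toZMod : ℤ_[q] →+* ZMod q) := h0
    rw [PadicInt.ker_toZMod] at this
    rw [IsLocalRing.mem_maximalIdeal, mem_nonunits_iff] at this
    exact this (PadicInt.isUnit_iff.mpr hx)
  have hWne : PadicInt.toZMod W' ≠ 0 := hunit W' (by rw [PadicInt.norm_def]; exact hnW)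
  have hAne : PadicInt.toZMod A' ≠ 0 := hunit A' (by rw [PadicInt.norm_def]; exact hnA)
  -- finish in ZMod q
  set x : ZMod q := PadicInt.toZMod W'
  set y : ZMod q := PadicInt.toZMod A'
  have hdval : (d : ZMod q) = -1 * (y * x⁻¹) ^ 2 := by
    field_simp
    linear_combination heq4
  constructor
  · rintro ⟨r, hr⟩
    have hyx : y * x⁻¹ ≠ 0 := by
      apply mul_ne_zero hAne
      exact inv_ne_zero hWne
    refine ⟨r * (y * x⁻¹)⁻¹, ?_⟩
    have : (-1 : ZMod q) = (d : ZMod q) * ((y * x⁻¹)⁻¹) ^ 2 := by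
      rw [hdval]; field_simp
    rw [this, hr]; ring
  · rintro ⟨t, ht⟩
    refine ⟨t * (y * x⁻¹), ?_⟩
    rw [hdval, ht]; ring
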